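/- Let α ∈ (0,1) and L, M > 0, and let h, σ : [0,1] → ℝ be measurable functions with |h| ≤ L and |σ| ≤ M. For 0 < v < s ≤ 1 define g₁(s,v) = ∫_v^s ∫_v^r (s−r)^{α−1} r^α h(r) σ(v) (u−v)^{−α} du dr. Then the iterated integral converges absolutely and |g₁(s,v)| ≤ (L M / (1−α)) B(α, 2−α) s^α (s−v), where B denotes the Beta function. In particular, for every fixed s ∈ (0,1], g₁(s,v) → 0 as v → s⁻. -/
import Mathlib


open MeasureTheory Set intervalIntegral Filter Topology

/-- The (real) Beta function `B(a,b) = ∫_0^1 y^(a-1) (1-y)^(b-1) dy`. -/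
noncomputable def betaFun (a b : ℝ) : ℝ :=
  ∫ y in (0:ℝ)..1, y ^ (a - 1) * (1 - y) ^ (b - 1)

/-- The kernel `g₁` from the singular-case Onsager–Machlup computation. -/
noncomputable def g₁ (α : ℝ) (h σ : ℝ → ℝ) (s v : ℝ) : ℝ :=
  ∫ r in v..s, ∫ u in v..r, (s - r) ^ (α - 1) * r ^ α * h r * σ v * (u - v) ^ (-α)

/-- Value of the inner integral. -/
lemma inner_val (α : ℝ) (hα0 : 0 < α) (hα1 : α < 1) (v r : ℝ) :
    (∫ u in v..r, (u - v) ^ (-α)) = (r - v) ^ (1 - α) / (1 - α) := by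
  have h1 : (∫ u in v..r, (u - v) ^ (-α))
      = ∫ t in v - v..r - v, t ^ (-α) :=
    intervalIntegral.integral_comp_sub_right (fun t => t ^ (-α)) v
  rw [h1, sub_self]
  rw [integral_rpow (Or.inl (by linarith))]
  rw [Real.zero_rpow (by linarith)]
  rw [show -α + 1 = 1 - α by ring]
  rw [sub_zero]

lemma base_integrable {α : ℝ} (hα0 : 0 < α) (v s : ℝ) :
    IntervalIntegrable (fun r => (s - r) ^ (α - 1)) volume v s := by
  have h := (intervalIntegrable_rpow' (show (-1:ℝ) < α - 1 by linarith)
    (a := s - v) (b := 0)).comp_sub_left s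
  simpa using h

/-- For `α ∈ (0,1)`, `|h| ≤ L`, `|σ| ≤ M`, the kernel
`g₁(s,v) = ∫_v^s ∫_v^r (s-r)^{α-1} r^α h(r) σ(v) (u-v)^{-α} du dr`
converges absolutely and satisfies
`|g₁(s,v)| ≤ (L M/(1-α)) B(α, 2-α) s^α (s-v)`; in particular it vanishes on
the diagonal. -/
theorem g₁_bound
    (α L M : ℝ) (hα0 : 0 < α) (hα1 : α < 1) (hL : 0 < L) (hM : 0 < M)
    (h σ : ℝ → ℝ) (hmh : Measurable h) (hmσ : Measurable σ)
    (hh : ∀ x ∈ Icc (0:ℝ) 1, |h x| ≤ L) (hσ : ∀ x ∈ Icc (0:ℝ) 1, |σ x| ≤ M) :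
    (∀ v s : ℝ, 0 < v → v < s → s ≤ 1 →
      (∀ r ∈ Ioo v s,
        IntervalIntegrable
          (fun u => (s - r) ^ (α - 1) * r ^ α * h r * σ v * (u - v) ^ (-α))
          volume v r) ∧
      IntervalIntegrable
        (fun r => ∫ u in v..r,
            (s - r) ^ (α - 1) * r ^ α * h r * σ v * (u - v) ^ (-α))
        volume v s ∧
      |g₁ α h σ s v| ≤ L * M / (1 - α) * betaFun α (2 - α) * s ^ α * (s - v)) ∧
    ∀ s ∈ Ioc (0:ℝ) 1,
      Tendsto (fun v => g₁ α h σ s v) (nhdsWithin s (Iio s)) (nhds 0) := by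
  have h1α : (0:ℝ) < 1 - α := by linarith
  have main : ∀ v s : ℝ, 0 < v → v < s → s ≤ 1 →
      (∀ r ∈ Ioo v s,
        IntervalIntegrable
          (fun u => (s - r) ^ (α - 1) * r ^ α * h r * σ v * (u - v) ^ (-α))
          volume v r) ∧
      IntervalIntegrable
        (fun r => ∫ u in v..r,
            (s - r) ^ (α - 1) * r ^ α * h r * σ v * (u - v) ^ (-α))
        volume v s ∧
      |g₁ α h σ s v| ≤ L * M / (1 - α) * betaFun α (2 - α) * s ^ α * (s - v) := by
    intro v s hv hvs hs1
    have hsv : (0:ℝ) < s - v := by linarith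
    set G : ℝ → ℝ :=
      fun r => (s - r) ^ (α - 1) * r ^ α * h r * σ v * ((r - v) ^ (1 - α) / (1 - α))
      with hGdef
    set F : ℝ → ℝ := fun r => (s - r) ^ (α - 1) * (r - v) ^ (1 - α) with hFdef
    set C : ℝ := L * M * s ^ α / (1 - α) with hCdef
    -- inner integrability
    have hinner : ∀ r : ℝ,
        IntervalIntegrable
          (fun u => (s - r) ^ (α - 1) * r ^ α * h r * σ v * (u - v) ^ (-α))
          volume v r := by
      intro r
      have hbase : IntervalIntegrable (fun u => (u - v) ^ (-α)) volume v r := by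
        have := (intervalIntegrable_rpow' (show (-1:ℝ) < -α by linarith)
          (a := 0) (b := r - v)).comp_sub_right v
        simpa using this
      exact hbase.const_mul _
    -- the outer integrand equals G
    have hInt_eq : (fun r => ∫ u in v..r,
        (s - r) ^ (α - 1) * r ^ α * h r * σ v * (u - v) ^ (-α)) = G := by
      funext r
      rw [intervalIntegral.integral_const_mul, inner_val α hα0 hα1 v r]
    -- measurability
    have hGm : Measurable G := by
      rw [hGdef]; fun_prop
    have hFm : Measurable F := by
      rw [hFdef]; fun_prop
    have hbase : IntervalIntegrable (fun r => (s - r) ^ (α - 1)) volume v s :=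
      base_integrable hα0 v s
    -- F is interval integrable
    have hFint : IntervalIntegrable F volume v s := by
      refine (hbase.const_mul ((s - v) ^ (1 - α))).mono_fun'
        hFm.aestronglyMeasurable.restrict ?_
      rw [uIoc_of_le hvs.le]
      refine (ae_restrict_iff' measurableSet_Ioc).2 (.of_forall fun r hr => ?_)
      obtain ⟨hr1, hr2⟩ := hr
      have hsr : 0 ≤ s - r := by linarith
      have hrv : 0 ≤ r - v := le_of_lt (by linarith)
      have h1 : (r - v) ^ (1 - α) ≤ (s - v) ^ (1 - α) :=
        Real.rpow_le_rpow hrv (by linarith) h1α.le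
      have h2 : 0 ≤ (s - r) ^ (α - 1) := Real.rpow_nonneg hsr _
      have h3 : 0 ≤ (r - v) ^ (1 - α) := Real.rpow_nonneg hrv _
      show ‖F r‖ ≤ (s - v) ^ (1 - α) * (s - r) ^ (α - 1)
      rw [Real.norm_eq_abs, hFdef, abs_of_nonneg (mul_nonneg h2 h3)]
      calc (s - r) ^ (α - 1) * (r - v) ^ (1 - α)
          ≤ (s - r) ^ (α - 1) * (s - v) ^ (1 - α) := by
            exact mul_le_mul_of_nonneg_left h1 h2
        _ = (s - v) ^ (1 - α) * (s - r) ^ (α - 1) := by ring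
    -- pointwise bound
    have hptw : ∀ r ∈ Icc v s, |G r| ≤ C * F r := by
      intro r hr
      obtain ⟨hrv, hrs⟩ := hr
      have hr0 : 0 < r := lt_of_lt_of_le hv hrv
      have hsr : 0 ≤ s - r := by linarith
      have hrv' : 0 ≤ r - v := by linarith
      have hh1 : |h r| ≤ L := hh r ⟨hr0.le, by linarith⟩
      have hσ1 : |σ v| ≤ M := hσ v ⟨hv.le, by linarith⟩
      have e1 : 0 ≤ (s - r) ^ (α - 1) := Real.rpow_nonneg hsr _
      have e2 : 0 ≤ r ^ α := Real.rpow_nonneg hr0.le _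
      have e3 : 0 ≤ (r - v) ^ (1 - α) / (1 - α) :=
        div_nonneg (Real.rpow_nonneg hrv' _) h1α.le
      have e4 : r ^ α ≤ s ^ α := Real.rpow_le_rpow hr0.le hrs hα0.le
      calc |G r|
          = (s - r) ^ (α - 1) * r ^ α * |h r| * |σ v|
              * ((r - v) ^ (1 - α) / (1 - α)) := by
            rw [hGdef]
            rw [abs_mul, abs_mul, abs_mul, abs_mul, abs_of_nonneg e1,
              abs_of_nonneg e2, abs_of_nonneg e3]
        _ ≤ (s - r) ^ (α - 1) * s ^ α * L * M * ((r - v) ^ (1 - α) / (1 - α)) := by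
            have n1 : 0 ≤ (s - r) ^ (α - 1) * r ^ α := mul_nonneg e1 e2
            have n2 : 0 ≤ |h r| := abs_nonneg _
            have n3 : 0 ≤ |σ v| := abs_nonneg _
            have hs0' : (0:ℝ) ≤ s := by linarith
            have es : 0 ≤ s ^ α := Real.rpow_nonneg hs0' _
            gcongr
        _ = C * F r := by rw [hCdef, hFdef]; ring
    -- G is interval integrable
    have hGint : IntervalIntegrable G volume v s := by
      refine (hFint.const_mul C).mono_fun' hGm.aestronglyMeasurable.restrict ?_
      rw [uIoc_of_le hvs.le]
      refine (ae_restrict_iff' measurableSet_Ioc).2 (.of_forall fun r hr => ?_)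
      show ‖G r‖ ≤ C * F r
      rw [Real.norm_eq_abs]
      exact hptw r ⟨hr.1.le, hr.2⟩
    -- Beta substitution
    have hbeta : (∫ r in v..s, F r) = (s - v) * betaFun α (2 - α) := by
      have hc : s - v ≠ 0 := ne_of_gt hsv
      have hsub := intervalIntegral.integral_comp_mul_add (a := (0:ℝ)) (b := 1)
        (f := F) hc v
      have hbnds1 : (s - v) * 0 + v = v := by ring
      have hbnds2 : (s - v) * 1 + v = s := by ring
      rw [hbnds1, hbnds2] at hsub
      -- LHS integrand simplifies
      have hcongr : (∫ y in (0:ℝ)..1, F ((s - v) * y + v))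
          = ∫ y in (0:ℝ)..1, (1 - y) ^ (α - 1) * y ^ (1 - α) := by
        refine intervalIntegral.integral_congr fun y hy => ?_
        rw [uIcc_of_le (by norm_num : (0:ℝ) ≤ 1)] at hy
        obtain ⟨hy0, hy1⟩ := hy
        have e1 : s - ((s - v) * y + v) = (s - v) * (1 - y) := by ring
        have e2 : (s - v) * y + v - v = (s - v) * y := by ring
        rw [hFdef]
        simp only
        rw [e1, e2, Real.mul_rpow hsv.le (by linarith), Real.mul_rpow hsv.le hy0]
        have e3 : (s - v) ^ (α - 1) * (s - v) ^ (1 - α) = 1 := by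
          rw [← Real.rpow_add hsv]
          norm_num
        calc (s - v) ^ (α - 1) * (1 - y) ^ (α - 1) * ((s - v) ^ (1 - α) * y ^ (1 - α))
            = ((s - v) ^ (α - 1) * (s - v) ^ (1 - α))
                * ((1 - y) ^ (α - 1) * y ^ (1 - α)) := by ring
          _ = (1 - y) ^ (α - 1) * y ^ (1 - α) := by rw [e3, one_mul]
      -- reflection to Beta
      have hrefl : (∫ y in (0:ℝ)..1, (1 - y) ^ (α - 1) * y ^ (1 - α))
          = betaFun α (2 - α) := by
        have := intervalIntegral.integral_comp_sub_left (a := (0:ℝ)) (b := 1)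
          (fun t => t ^ (α - 1) * (1 - t) ^ (1 - α)) 1
        simp only [sub_sub_cancel, sub_self, sub_zero] at this
        rw [this, betaFun]
        congr 1
        funext y
        rw [show (2:ℝ) - α - 1 = 1 - α by ring]
      rw [hcongr, hrefl] at hsub
      rw [smul_eq_mul] at hsub
      field_simp at hsub
      linarith [hsub]
    -- main bound
    refine ⟨fun r _ => hinner r, ?_, ?_⟩
    · rw [hInt_eq]; exact hGint
    · have hg1 : g₁ α h σ s v = ∫ r in v..s, G r := by
        rw [g₁, hInt_eq]
      rw [hg1]
      calc |∫ r in v..s, G r|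
          ≤ ∫ r in v..s, |G r| := abs_integral_le_integral_abs hvs.le
        _ ≤ ∫ r in v..s, C * F r :=
            integral_mono_on hvs.le hGint.abs (hFint.const_mul C) hptw
        _ = C * ∫ r in v..s, F r := intervalIntegral.integral_const_mul C F
        _ = C * ((s - v) * betaFun α (2 - α)) := by rw [hbeta]
        _ = L * M / (1 - α) * betaFun α (2 - α) * s ^ α * (s - v) := by
            rw [hCdef]; ring
  refine ⟨main, ?_⟩
  intro s hs
  obtain ⟨hs0, hs1'⟩ := hs
  set C0 : ℝ := L * M / (1 - α) * betaFun α (2 - α) * s ^ α with hC0def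
  have hev : ∀ᶠ v in nhdsWithin s (Iio s), v ∈ Ioo (0:ℝ) s :=
    Ioo_mem_nhdsLT_of_mem ⟨hs0, le_refl s⟩
  apply squeeze_zero_norm' (a := fun v => C0 * (s - v))
  · filter_upwards [hev] with v hvmem
    obtain ⟨hv0, hvs⟩ := hvmem
    have := (main v s hv0 hvs hs1').2.2
    rw [Real.norm_eq_abs]
    calc |g₁ α h σ s v| ≤ L * M / (1 - α) * betaFun α (2 - α) * s ^ α * (s - v) :=
          this
      _ = C0 * (s - v) := by rw [hC0def]
  · have h1 : Tendsto (fun v : ℝ => C0 * (s - v)) (nhds s) (nhds (C0 * (s - s))) :=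
      tendsto_const_nhds.mul (tendsto_const_nhds.sub tendsto_id)
    rw [sub_self, mul_zero] at h1
    exact h1.mono_left nhdsWithin_le_nhds
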